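/- If A is unitarily equivalent to a weighted permutation, then A is the limit of a sequence of half-normal matrices each of which has pairwise distinct singular values. -/

import Mathlib

open Matrix ComplexOrder

def IsWeightedPerm {n : ℕ} (A : Matrix (Fin n) (Fin n) ℂ) : Prop :=
  (∀ i j₁ j₂, A i j₁ ≠ 0 → A i j₂ ≠ 0 → j₁ = j₂) ∧
  (∀ j i₁ i₂, A i₁ j ≠ 0 → A i₂ j ≠ 0 → i₁ = i₂)

def UnitEquivWeightedPerm {n : ℕ} (A : Matrix (Fin n) (Fin n) ℂ) : Prop :=
  ∃ (V B : Matrix (Fin n) (Fin n) ℂ), Vᴴ * V = 1 ∧ IsWeightedPerm B ∧ A = Vᴴ * B * V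

namespace Matrix.PosSemidef

/-- The old (Mathlib, December 2024) square root of a positive semidefinite matrix. -/
noncomputable def sqrt {n 𝕜 : Type*} [Fintype n] [RCLike 𝕜] [DecidableEq n] {A : Matrix n n 𝕜}
    (hA : PosSemidef A) : Matrix n n 𝕜 :=
  hA.1.eigenvectorUnitary.1 * diagonal ((↑) ∘ (√·) ∘ hA.1.eigenvalues) *
  (star hA.1.eigenvectorUnitary : Matrix n n 𝕜)

lemma posSemidef_sqrt {n 𝕜 : Type*} [Fintype n] [RCLike 𝕜] [DecidableEq n] {A : Matrix n n 𝕜}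
    (hA : PosSemidef A) : PosSemidef hA.sqrt := by
  apply PosSemidef.mul_mul_conjTranspose_same
  refine posSemidef_diagonal_iff.mpr fun i ↦ ?_
  rw [Function.comp_apply, RCLike.nonneg_iff]
  constructor
  · simp only [RCLike.ofReal_re]
    exact Real.sqrt_nonneg _
  · simp only [RCLike.ofReal_im]

end Matrix.PosSemidef

/-- `A` has pairwise distinct singular values, i.e. the eigenvalues of
`(AᴴA)^(1/2)` are pairwise distinct. -/
def HasDistinctSingularValues {n : ℕ} (A : Matrix (Fin n) (Fin n) ℂ) : Prop :=
  Function.Injective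
    (Matrix.posSemidef_conjTranspose_mul_self A).posSemidef_sqrt.isHermitian.eigenvalues

section Aux

lemma exists_perm_aux {n : ℕ} {B : Matrix (Fin n) (Fin n) ℂ}
    (h1 : ∀ i j₁ j₂, B i j₁ ≠ 0 → B i j₂ ≠ 0 → j₁ = j₂)
    (h2 : ∀ j i₁ i₂, B i₁ j ≠ 0 → B i₂ j ≠ 0 → i₁ = i₂) :
    ∃ σ : Equiv.Perm (Fin n), ∀ i j, B i j ≠ 0 → j = σ i := by
  classical
  set S : Finset (Fin n) := Finset.univ.filter (fun i => ∃ j, B i j ≠ 0) with hS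
  have hmemS : ∀ i, i ∈ S ↔ ∃ j, B i j ≠ 0 := by intro i; simp [hS]
  set f : Fin n → Fin n := fun i =>
    if h : ∃ j, B i j ≠ 0 then h.choose else i with hf
  have hfspec : ∀ i ∈ S, B i (f i) ≠ 0 := by
    intro i hi
    rw [hmemS] at hi
    simp only [hf, dif_pos hi]
    exact hi.choose_spec
  have hfinj : Set.InjOn f S := by
    intro i hi i' hi' he
    exact h2 (f i) i i' (hfspec i hi) (he ▸ hfspec i' hi')
  set T : Finset (Fin n) := S.image f with hT
  have hcard : Sᶜ.card = Tᶜ.card := by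
    rw [Finset.card_compl, Finset.card_compl, hT,
      Finset.card_image_of_injOn hfinj]
  set e := Finset.equivOfCardEq hcard with he
  set g : Fin n → Fin n := fun i =>
    if h : i ∈ S then f i else (e ⟨i, by simp [h]⟩ : Fin n) with hg
  have hginj : Function.Injective g := by
    intro i i' hgi
    by_cases hi : i ∈ S <;> by_cases hi' : i' ∈ S
    · exact hfinj hi hi' (by simpa [hg, hi, hi'] using hgi)
    · exfalso
      simp only [hg, dif_pos hi, dif_neg hi'] at hgi
      have h1' : f i ∈ T := Finset.mem_image_of_mem f hi
      have h2' : (e ⟨i', by simp [hi']⟩ : Fin n) ∈ Tᶜ := (e ⟨i', by simp [hi']⟩).2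
      rw [← hgi] at h2'
      exact (Finset.mem_compl.mp h2') h1'
    · exfalso
      simp only [hg, dif_pos hi', dif_neg hi] at hgi
      have h1' : f i' ∈ T := Finset.mem_image_of_mem f hi'
      have h2' : (e ⟨i, by simp [hi]⟩ : Fin n) ∈ Tᶜ := (e ⟨i, by simp [hi]⟩).2
      rw [hgi] at h2'
      exact (Finset.mem_compl.mp h2') h1'
    · simp only [hg, dif_neg hi, dif_neg hi'] at hgi
      have := e.injective (Subtype.ext hgi)
      simpa using congrArg Subtype.val this
  refine ⟨Equiv.ofBijective g (Finite.injective_iff_bijective.mp hginj), ?_⟩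
  intro i j hij
  have hi : i ∈ S := (hmemS i).mpr ⟨j, hij⟩
  have : g i = f i := by simp [hg, hi]
  rw [Equiv.ofBijective_apply, this]
  exact h1 i j (f i) hij (hfspec i hi)

lemma exists_delta {n : ℕ} (ρ : Fin n → ℝ) {ε : ℝ} (hε : 0 < ε) :
    ∃ δ : ℝ, 0 < δ ∧ δ < ε ∧
      Function.Injective (fun i : Fin n => ρ i + ((i : ℕ) + 1) * δ) := by
  classical
  set F : Fin n × Fin n → Set ℝ := fun p =>
    {δ | ρ p.1 + ((p.1 : ℕ) + 1) * δ = ρ p.2 + ((p.2 : ℕ) + 1) * δ ∧ p.1 ≠ p.2} with hF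
  have hFfin : ∀ p, (F p).Finite := by
    intro p
    apply Set.Subsingleton.finite
    intro x hx y hy
    have hne : ((p.1 : ℕ) : ℝ) ≠ ((p.2 : ℕ) : ℝ) := by
      have : (p.1 : ℕ) ≠ (p.2 : ℕ) := fun h => hx.2 (Fin.val_injective h)
      exact_mod_cast this
    have h1 : (((p.1 : ℕ) : ℝ) + 1) * x - (((p.2 : ℕ) : ℝ) + 1) * x
        = (((p.1 : ℕ) : ℝ) + 1) * y - (((p.2 : ℕ) : ℝ) + 1) * y := by
      have e1 := hx.1
      have e2 := hy.1
      linarith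
    have h2 : (((p.1 : ℕ) : ℝ) - ((p.2 : ℕ) : ℝ)) * x
        = (((p.1 : ℕ) : ℝ) - ((p.2 : ℕ) : ℝ)) * y := by ring_nf; ring_nf at h1; linarith
    exact mul_left_cancel₀ (sub_ne_zero.mpr hne) h2
  have hbad : (⋃ p, F p).Finite := Set.finite_iUnion hFfin
  have hIoo : (Set.Ioo (0:ℝ) ε).Infinite := Set.Ioo_infinite hε
  obtain ⟨δ, hδ⟩ := (hIoo.diff hbad).nonempty
  refine ⟨δ, hδ.1.1, hδ.1.2, ?_⟩
  intro i j hij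
  by_contra hne
  exact hδ.2 (Set.mem_iUnion.mpr ⟨(i, j), by exact ⟨hij, hne⟩⟩)

lemma wp_conjT_mul {n : ℕ} (σ : Equiv.Perm (Fin n)) (v : Fin n → ℂ) :
    (Matrix.of fun i j => if j = σ i then v i else 0)ᴴ *
      (Matrix.of fun i j => if j = σ i then v i else 0)
      = Matrix.diagonal (fun j => star (v (σ.symm j)) * v (σ.symm j)) := by
  ext j k
  simp only [Matrix.mul_apply, conjTranspose_apply, Matrix.of_apply]
  rw [Finset.sum_eq_single (σ.symm j)]
  · by_cases h : k = j
    · subst h; simp [Matrix.diagonal]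
    · simp only [Equiv.apply_symm_apply]
      rw [if_neg h, Matrix.diagonal_apply_ne' _ h]
      simp
  · intro b _ hb
    rw [if_neg (fun h => hb (by rw [h, Equiv.symm_apply_apply]))]
    simp
  · simp

lemma wp_mul_conjT {n : ℕ} (σ : Equiv.Perm (Fin n)) (v : Fin n → ℂ) :
    (Matrix.of fun i j => if j = σ i then v i else 0) *
      (Matrix.of fun i j => if j = σ i then v i else 0)ᴴ
      = Matrix.diagonal (fun i => v i * star (v i)) := by
  ext i k
  simp only [Matrix.mul_apply, conjTranspose_apply, Matrix.of_apply]
  rw [Finset.sum_eq_single (σ i)]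
  · by_cases h : k = i
    · subst h; simp [Matrix.diagonal]
    · rw [if_pos rfl, if_neg (fun hh : σ i = σ k => h (σ.injective hh).symm),
        Matrix.diagonal_apply_ne' _ h]
      simp
  · intro b _ hb
    rw [if_neg hb]
    simp
  · simp

lemma eig_congr {n : ℕ} {M N : Matrix (Fin n) (Fin n) ℂ}
    (hM : M.IsHermitian) (hN : N.IsHermitian) (h : M = N) :
    hM.eigenvalues = hN.eigenvalues := by subst h; rfl

lemma spectrum_conj_diag {n : ℕ} {V : Matrix (Fin n) (Fin n) ℂ}
    (hV : Vᴴ * V = 1) (c : Fin n → ℝ) :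
    spectrum ℝ (Vᴴ * Matrix.diagonal (fun j => (c j : ℂ)) * V) = Set.range c := by
  have hV' : V * Vᴴ = 1 := mul_eq_one_comm.mp hV
  set u : (Matrix (Fin n) (Fin n) ℂ)ˣ := ⟨V, Vᴴ, hV', hV⟩ with hu
  have hconj : Vᴴ * Matrix.diagonal (fun j => (c j : ℂ)) * V
      = (↑u⁻¹ : Matrix (Fin n) (Fin n) ℂ) * Matrix.diagonal (fun j => (c j : ℂ)) *
        (↑u : Matrix (Fin n) (Fin n) ℂ) := rfl
  rw [hconj, spectrum.units_conjugate']
  ext x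
  rw [← spectrum.algebraMap_mem_iff ℂ]
  rw [spectrum_diagonal]
  constructor
  · rintro ⟨j, hj⟩
    exact ⟨j, Complex.ofReal_injective hj⟩
  · rintro ⟨j, hj⟩
    exact ⟨j, by simp [hj]⟩

lemma aux_distinct {n : ℕ} {M H : Matrix (Fin n) (Fin n) ℂ}
    (hH : H.PosSemidef) (hsq : H ^ 2 = Mᴴ * M)
    {c : Fin n → ℝ} (hc : Function.Injective c)
    (hspec : spectrum ℝ H = Set.range c) :
    HasDistinctSingularValues M := by
  have hpsd := Matrix.posSemidef_conjTranspose_mul_self M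
  have hsqrt : H = hpsd.sqrt := by
    open scoped MatrixOrder in
    have h1 : CFC.sqrt (Mᴴ * M) = H := CFC.sqrt_unique (by rw [← sq, hsq]) hH.nonneg
    open scoped MatrixOrder in
    rw [← h1, CFC.sqrt_eq_real_sqrt _ hpsd.nonneg, cfcₙ_eq_cfc, hpsd.1.cfc_eq]
    rfl
  have he : hpsd.posSemidef_sqrt.isHermitian.eigenvalues = hH.1.eigenvalues :=
    eig_congr _ _ hsqrt.symm
  unfold HasDistinctSingularValues
  rw [he]
  have hrange : Set.range hH.1.eigenvalues = Set.range c := by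
    rw [← Matrix.IsHermitian.spectrum_real_eq_range_eigenvalues hH.1, hspec]
  -- injectivity via cardinality
  set f : Fin n → Set.range c := fun i =>
    ⟨hH.1.eigenvalues i, by rw [← hrange]; exact Set.mem_range_self i⟩ with hfdef
  have hfsurj : Function.Surjective f := by
    rintro ⟨x, hx⟩
    rw [← hrange] at hx
    obtain ⟨i, hi⟩ := hx
    exact ⟨i, Subtype.ext hi⟩
  have hcard : Fintype.card (Fin n) = Fintype.card (Set.range c) := by
    rw [Set.card_range_of_injective hc]
  have hfbij : Function.Bijective f :=
    (Fintype.bijective_iff_surjective_and_card f).mpr ⟨hfsurj, hcard⟩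
  intro i j hij
  exact hfbij.1 (Subtype.ext hij)

lemma conj_mul_conj {n : ℕ} {V : Matrix (Fin n) (Fin n) ℂ} (hVV : V * Vᴴ = 1)
    (M N : Matrix (Fin n) (Fin n) ℂ) :
    (Vᴴ * M * V) * (Vᴴ * N * V) = Vᴴ * (M * N) * V := by
  have : (Vᴴ * M * V) * (Vᴴ * N * V) = Vᴴ * M * (V * Vᴴ) * (N * V) := by
    noncomm_ring
  rw [this, hVV, Matrix.mul_one]
  noncomm_ring

end Aux

theorem unitEquivWeightedPerm_limit_distinct {n : ℕ}
    (A : Matrix (Fin n) (Fin n) ℂ) (hA : UnitEquivWeightedPerm A) :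
    ∃ B : ℕ → Matrix (Fin n) (Fin n) ℂ,
      (∀ m, Commute ((B m)ᴴ * B m) (B m * (B m)ᴴ) ∧ HasDistinctSingularValues (B m)) ∧
      Filter.Tendsto B Filter.atTop (nhds A) := by
  classical
  obtain ⟨V, B, hV, hBwp, hAeq⟩ := hA
  have hVV : V * Vᴴ = 1 := mul_eq_one_comm.mp hV
  obtain ⟨σ, hσ⟩ := exists_perm_aux hBwp.1 hBwp.2
  set w : Fin n → ℂ := fun i => B i (σ i) with hwdef
  set u : Fin n → ℂ := fun i => if w i = 0 then 1 else w i / ‖w i‖ with hudef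
  have hu_unit : ∀ i, star (u i) * u i = 1 := by
    intro i
    by_cases h : w i = 0
    · simp [hudef, h]
    · have hn : (‖w i‖ : ℂ) ≠ 0 := by
        simpa using norm_ne_zero_iff.mpr h
      simp only [hudef, if_neg h]
      rw [star_div₀, div_mul_div_comm]
      rw [Complex.star_def, Complex.conj_mul', Complex.conj_ofReal]
      rw [div_eq_one_iff_eq (mul_ne_zero hn hn)]
      ring
  have hwu : ∀ i, (‖w i‖ : ℂ) * u i = w i := by
    intro i
    by_cases h : w i = 0
    · simp [hudef, h]
    · have hn : (‖w i‖ : ℂ) ≠ 0 := by simpa using norm_ne_zero_iff.mpr h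
      simp only [hudef, if_neg h]
      rw [mul_comm, div_mul_cancel₀ _ hn]
  -- choose the perturbations
  have hδ : ∀ m : ℕ, ∃ δ : ℝ, 0 < δ ∧ δ < 1 / (m + 1) ∧
      Function.Injective (fun i : Fin n => ‖w i‖ + ((i : ℕ) + 1) * δ) := by
    intro m
    exact exists_delta (fun i => ‖w i‖) ((by positivity : (0:ℝ) < 1 / (m + 1)))
  choose δ hδpos hδlt hδinj using hδ
  set d : ℕ → Fin n → ℝ := fun m i => ‖w i‖ + ((i : ℕ) + 1) * δ m with hddef
  have hdpos : ∀ m i, 0 < d m i := by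
    intro m i
    have : (0:ℝ) < ((i:ℕ) + 1) * δ m := mul_pos (by positivity) (hδpos m)
    have h0 : (0:ℝ) ≤ ‖w i‖ := norm_nonneg _
    simp only [hddef]; linarith
  set v : ℕ → Fin n → ℂ := fun m i => ((d m i : ℝ) : ℂ) * u i with hvdef
  have hvsq : ∀ m i, star (v m i) * v m i = (((d m i) ^ 2 : ℝ) : ℂ) := by
    intro m i
    simp only [hvdef, star_mul']
    rw [show star ((d m i : ℝ) : ℂ) = ((d m i : ℝ) : ℂ) by
      simp [Complex.star_def, Complex.conj_ofReal]]
    rw [show ((d m i : ℝ) : ℂ) * star (u i) * (((d m i : ℝ) : ℂ) * u i)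
      = ((d m i : ℝ) : ℂ) * ((d m i : ℝ) : ℂ) * (star (u i) * u i) by ring]
    rw [hu_unit]
    push_cast
    ring
  have hvsq' : ∀ m i, v m i * star (v m i) = (((d m i) ^ 2 : ℝ) : ℂ) := by
    intro m i
    rw [mul_comm]
    exact hvsq m i
  set Bm : ℕ → Matrix (Fin n) (Fin n) ℂ :=
    fun m => Matrix.of fun i j => if j = σ i then v m i else 0 with hBmdef
  set Am : ℕ → Matrix (Fin n) (Fin n) ℂ := fun m => Vᴴ * Bm m * V with hAmdef
  have hconjT : ∀ m, (Am m)ᴴ = Vᴴ * (Bm m)ᴴ * V := by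
    intro m
    simp [hAmdef, Matrix.conjTranspose_mul, Matrix.mul_assoc]
  have hBtB : ∀ m, (Bm m)ᴴ * Bm m
      = Matrix.diagonal (fun j => (((d m (σ.symm j)) ^ 2 : ℝ) : ℂ)) := by
    intro m
    rw [hBmdef, wp_conjT_mul]
    rw [show (fun j => star (v m (σ.symm j)) * v m (σ.symm j))
      = fun j => (((d m (σ.symm j)) ^ 2 : ℝ) : ℂ) from funext fun j => hvsq m _]
  have hBBt : ∀ m, Bm m * (Bm m)ᴴ
      = Matrix.diagonal (fun i => (((d m i) ^ 2 : ℝ) : ℂ)) := by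
    intro m
    rw [hBmdef, wp_mul_conjT]
    rw [show (fun i => v m i * star (v m i))
      = fun i => (((d m i) ^ 2 : ℝ) : ℂ) from funext fun i => hvsq' m _]
  have hAtA : ∀ m, (Am m)ᴴ * Am m
      = Vᴴ * Matrix.diagonal (fun j => (((d m (σ.symm j)) ^ 2 : ℝ) : ℂ)) * V := by
    intro m
    rw [hconjT m, hAmdef]
    rw [conj_mul_conj hVV, hBtB]
  have hAAt : ∀ m, Am m * (Am m)ᴴ
      = Vᴴ * Matrix.diagonal (fun i => (((d m i) ^ 2 : ℝ) : ℂ)) * V := by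
    intro m
    rw [hconjT m, hAmdef]
    rw [conj_mul_conj hVV, hBBt]
  refine ⟨Am, fun m => ⟨?_, ?_⟩, ?_⟩
  · -- half-normality
    unfold Commute SemiconjBy
    rw [hAtA, hAAt, conj_mul_conj hVV, conj_mul_conj hVV,
      Matrix.diagonal_mul_diagonal, Matrix.diagonal_mul_diagonal]
    rw [show (fun i => (((d m (σ.symm i)) ^ 2 : ℝ) : ℂ) * (((d m i) ^ 2 : ℝ) : ℂ))
      = fun i => (((d m i) ^ 2 : ℝ) : ℂ) * (((d m (σ.symm i)) ^ 2 : ℝ) : ℂ)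
      from funext fun i => mul_comm _ _]
  · -- distinct singular values
    refine aux_distinct (H := Vᴴ * Matrix.diagonal
        (fun j => ((d m (σ.symm j) : ℝ) : ℂ)) * V) ?_ ?_
        (c := fun j => d m (σ.symm j)) ?_ ?_
    · refine Matrix.PosSemidef.conjTranspose_mul_mul_same ?_ V
      refine Matrix.PosSemidef.diagonal ?_
      intro j
      rw [Pi.zero_apply]
      exact Complex.zero_le_real.mpr (hdpos m (σ.symm j)).le
    · rw [pow_two, conj_mul_conj hVV, Matrix.diagonal_mul_diagonal, hAtA]
      rw [show (fun i => ((d m (σ.symm i) : ℝ) : ℂ) * ((d m (σ.symm i) : ℝ) : ℂ))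
        = fun i => (((d m (σ.symm i)) ^ 2 : ℝ) : ℂ) from funext fun i => by push_cast; ring]
    · intro j k hjk
      exact σ.symm.injective (hδinj m hjk)
    · exact spectrum_conj_diag hV _
  · -- convergence
    have hδ0 : Filter.Tendsto δ Filter.atTop (nhds 0) := by
      apply squeeze_zero (fun m => (hδpos m).le) (fun m => (hδlt m).le)
      exact tendsto_one_div_add_atTop_nhds_zero_nat
    have hBmlim : Filter.Tendsto Bm Filter.atTop (nhds B) := by
      refine tendsto_pi_nhds.mpr ?_
      intro i
      rw [tendsto_pi_nhds]
      intro j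
      by_cases h : j = σ i
      · subst h
        have h1 : ∀ m, Bm m i (σ i) = ((d m i : ℝ) : ℂ) * u i := by
          intro m; simp [hBmdef, hvdef]
        simp only [h1]
        have hd : Filter.Tendsto (fun m => d m i) Filter.atTop (nhds ‖w i‖) := by
          have : Filter.Tendsto (fun m => ‖w i‖ + ((i : ℕ) + 1) * δ m)
              Filter.atTop (nhds (‖w i‖ + ((i : ℕ) + 1) * 0)) :=
            tendsto_const_nhds.add (tendsto_const_nhds.mul hδ0)
          simpa using this
        have hcd : Filter.Tendsto (fun m => ((d m i : ℝ) : ℂ))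
            Filter.atTop (nhds ((‖w i‖ : ℝ) : ℂ)) :=
          (Complex.continuous_ofReal.tendsto _).comp hd
        have := hcd.mul (tendsto_const_nhds (x := u i))
        rw [hwu i] at this
        convert this using 2
      · have h1 : ∀ m, Bm m i j = 0 := by
          intro m; simp [hBmdef, h]
        have h2 : B i j = 0 := by
          by_contra hne
          exact h (hσ i j hne)
        simp only [h1, h2]
        exact tendsto_const_nhds
    have hg : Continuous (fun M : Matrix (Fin n) (Fin n) ℂ => Vᴴ * M * V) :=
      (continuous_const.matrix_mul continuous_id).matrix_mul continuous_const
    have := (hg.tendsto B).comp hBmlim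
    rw [hAeq]
    exact this
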